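/- Let W be an n×n real matrix and suppose M_X(ω I_n − W) = 0 for some real eigenvalue ω of W, where X is n×k of full column rank, k < n. Then for every λ with I_n − λW invertible, M_X(I_n − λW) = (1 − λω)M_X, and consequently for every y ∉ col(X), the profile quantity y'(I_n − λW)' M_X (I_n − λW) y equals (1 − λω)² y' M_X y. -/
import Mathlib


open Matrix

/-- The orthogonal projector onto the orthogonal complement of the column space of `X`. -/
noncomputable def MX {n k : ℕ} (X : Matrix (Fin n) (Fin k) ℝ) : Matrix (Fin n) (Fin n) ℝ :=
  1 - X * (Xᵀ * X)⁻¹ * Xᵀ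

lemma MX_symm {n k : ℕ} (X : Matrix (Fin n) (Fin k) ℝ) : (MX X)ᵀ = MX X := by
  unfold MX
  rw [transpose_sub, transpose_one, transpose_mul, transpose_mul, transpose_transpose,
    transpose_nonsing_inv, transpose_mul, transpose_transpose, Matrix.mul_assoc]

/-- If `M_X(ω I − W) = 0` for a real eigenvalue `ω` of `W`, then for every `λ`
with `I − λW` invertible, `M_X(I − λW) = (1 − λω) M_X`, and hence for every `y ∉ col(X)`,
`y'(I − λW)' M_X (I − λW) y = (1 − λω)² y' M_X y`. -/
theorem stmt17 {n k : ℕ} (hkn : k < n) (W : Matrix (Fin n) (Fin n) ℝ)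
    (X : Matrix (Fin n) (Fin k) ℝ) (hX : X.rank = k) (ω : ℝ)
    (hω : ∃ v : Fin n → ℝ, v ≠ 0 ∧ W.mulVec v = ω • v)
    (h : MX X * (ω • 1 - W) = 0)
    (l : ℝ) (hS : IsUnit (1 - l • W)) :
    MX X * (1 - l • W) = (1 - l * ω) • MX X ∧
    ∀ y : Fin n → ℝ, (¬ ∃ c : Fin k → ℝ, X.mulVec c = y) →
      ((1 - l • W).mulVec y) ⬝ᵥ (MX X).mulVec ((1 - l • W).mulVec y) =
        (1 - l * ω) ^ 2 * (y ⬝ᵥ (MX X).mulVec y) := by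
  have hW : MX X * W = ω • MX X := by
    rw [Matrix.mul_sub, sub_eq_zero] at h
    rw [← h, Matrix.mul_smul, Matrix.mul_one]
  have key : MX X * (1 - l • W) = (1 - l * ω) • MX X := by
    rw [Matrix.mul_sub, Matrix.mul_one, Matrix.mul_smul, hW, sub_smul, one_smul,
      smul_smul]
  refine ⟨key, fun y _ => ?_⟩
  have key2 : (1 - l • W)ᵀ * (MX X * (1 - l • W)) = ((1 - l * ω) ^ 2) • MX X := by
    rw [key, Matrix.mul_smul, ← MX_symm X, ← transpose_mul, key, transpose_smul,
      MX_symm X, smul_smul, sq]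
  calc ((1 - l • W).mulVec y) ⬝ᵥ (MX X).mulVec ((1 - l • W).mulVec y)
      = y ⬝ᵥ ((1 - l • W)ᵀ * (MX X * (1 - l • W))).mulVec y := by
        simp only [dotProduct_mulVec, ← vecMul_vecMul, vecMul_transpose]
    _ = (1 - l * ω) ^ 2 * (y ⬝ᵥ (MX X).mulVec y) := by
        rw [key2, smul_mulVec, dotProduct_smul, smul_eq_mul]
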